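/- Let N and d be positive integers, let u, v : Fin N → ℂ each have exactly d nonzero entries, and let r_u, r_v > 0 satisfy |u_i| ≤ r_u and |v_i| ≤ r_v for all i. Let ψ, φ : Fin N × Fin 2 × Fin 2 → ℂ be defined by: ψ(i,0,1) = (1/√d)·√(1 − |v_i|²/r_v²)·conj(v_i)/|v_i| if v_i ≠ 0 (and 0 if v_i = 0), ψ(i,1,1) = (1/√d)·v_i/r_v, ψ = 0 otherwise; φ(i,1,0) = (1/√d)·√(1 − |u_i|²/r_u²)·conj(u_i)/|u_i| if u_i ≠ 0 (and 0 if u_i = 0), φ(i,1,1) = (1/√d)·u_i/r_u, φ = 0 otherwise. Let P(0) = ‖(1/2)(φ⊗ψ + ψ⊗φ)‖² be the swap-test success probability, where (φ⊗ψ)(x,y) = φ(x)·ψ(y) componentwise. Then (2·P(0) − 1)·d²·r_u²·r_v² = |⟨u,v⟩|², where ⟨u,v⟩ = Σ_i conj(u_i)·v_i. -/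

import Mathlib

open scoped InnerProductSpace

private lemma tensor_inner {ι : Type*} [Fintype ι]
    (a b c e : EuclideanSpace ℂ ι) (ab ce : EuclideanSpace ℂ (ι × ι))
    (hab : ∀ x y, ab (x, y) = a x * b y) (hce : ∀ x y, ce (x, y) = c x * e y) :
    (inner ℂ ab ce : ℂ) = (inner ℂ a c : ℂ) * (inner ℂ b e : ℂ) := by
  simp only [PiLp.inner_apply, RCLike.inner_apply']
  rw [Finset.sum_mul_sum, Fintype.sum_prod_type]
  refine Finset.sum_congr rfl fun x _ => Finset.sum_congr rfl fun y _ => ?_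
  rw [hab, hce, map_mul]; ring

private lemma pair_norm (d : ℕ) (hd : 0 < d) (z : ℂ) (r : ℝ) (hr : 0 < r)
    (hb : ‖z‖ ≤ r) :
    starRingEnd ℂ (if z = 0 then 0 else
        ((Real.sqrt d)⁻¹ * Real.sqrt (1 - (‖z‖) ^ 2 / r ^ 2) : ℂ) *
          starRingEnd ℂ z / (‖z‖ : ℂ)) *
      (if z = 0 then 0 else
        ((Real.sqrt d)⁻¹ * Real.sqrt (1 - (‖z‖) ^ 2 / r ^ 2) : ℂ) *
          starRingEnd ℂ z / (‖z‖ : ℂ)) +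
    starRingEnd ℂ (((Real.sqrt d)⁻¹ : ℂ) * z / (r : ℂ)) *
      (((Real.sqrt d)⁻¹ : ℂ) * z / (r : ℂ)) =
    if z = 0 then 0 else (((d : ℝ)⁻¹ : ℝ) : ℂ) := by
  rcases eq_or_ne z 0 with h | h
  · simp [h]
  · rw [if_neg h, if_neg h]
    have hz : ‖z‖ ≠ 0 := by simpa using h
    have ht : (‖z‖) ^ 2 / r ^ 2 ≤ 1 := by
      rw [div_le_one (by positivity)]
      exact pow_le_pow_left₀ (norm_nonneg z) hb 2
    have ht0 : 0 ≤ 1 - (‖z‖) ^ 2 / r ^ 2 := by linarith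
    have hd0 : (d : ℝ) ≠ 0 := by exact_mod_cast hd.ne'
    have e1 : ∀ w : ℂ, starRingEnd ℂ w * w = (Complex.normSq w : ℂ) := fun w => by
      rw [mul_comm, Complex.mul_conj]
    rw [e1, e1, ← Complex.ofReal_add]
    congr 1
    simp only [Complex.normSq_div, Complex.normSq_mul, Complex.normSq_conj,
      Complex.normSq_ofReal, Complex.normSq_inv]
    rw [Real.mul_self_sqrt ht0]
    have hsd : Real.sqrt d * Real.sqrt d = d := Real.mul_self_sqrt (by positivity)
    have habs : ‖z‖ * ‖z‖ = Complex.normSq z := by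
      rw [← Complex.sq_norm]; ring
    have hzn : Complex.normSq z ≠ 0 := by simpa [Complex.normSq_eq_zero] using h
    field_simp
    rw [← Complex.sq_norm]
    rw [Real.sq_sqrt (by positivity)]
    ring

/-- The swap-test success probability `P(0)` on the states `ψ, φ` built from `d`-sparse
vectors `v, u` recovers the squared inner product: `(2·P(0) − 1)·d²·r_u²·r_v² = |⟨u,v⟩|²`. -/
theorem stmt_4 (N d : ℕ) (hN : 0 < N) (hd : 0 < d) (u v : Fin N → ℂ)
    (hud : (Finset.univ.filter fun i => u i ≠ 0).card = d)
    (hvd : (Finset.univ.filter fun i => v i ≠ 0).card = d)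
    (ru rv : ℝ) (hru : 0 < ru) (hrv : 0 < rv)
    (hubd : ∀ i, ‖u i‖ ≤ ru) (hvbd : ∀ i, ‖v i‖ ≤ rv)
    (ψ φ : EuclideanSpace ℂ (Fin N × Fin 2 × Fin 2))
    (hψ01 : ∀ i, ψ (i, 0, 1) =
      if v i = 0 then 0 else
        ((Real.sqrt d)⁻¹ * Real.sqrt (1 - (‖v i‖) ^ 2 / rv ^ 2) : ℂ) *
          starRingEnd ℂ (v i) / (‖v i‖ : ℂ))
    (hψ11 : ∀ i, ψ (i, 1, 1) = ((Real.sqrt d)⁻¹ : ℂ) * v i / (rv : ℂ))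
    (hψ0 : ∀ i j, ψ (i, j, 0) = 0)
    (hφ10 : ∀ i, φ (i, 1, 0) =
      if u i = 0 then 0 else
        ((Real.sqrt d)⁻¹ * Real.sqrt (1 - (‖u i‖) ^ 2 / ru ^ 2) : ℂ) *
          starRingEnd ℂ (u i) / (‖u i‖ : ℂ))
    (hφ11 : ∀ i, φ (i, 1, 1) = ((Real.sqrt d)⁻¹ : ℂ) * u i / (ru : ℂ))
    (hφ0 : ∀ i k, φ (i, 0, k) = 0)
    (φψ ψφ : EuclideanSpace ℂ ((Fin N × Fin 2 × Fin 2) × (Fin N × Fin 2 × Fin 2)))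
    (hφψ : ∀ x y, φψ (x, y) = φ x * ψ y)
    (hψφ : ∀ x y, ψφ (x, y) = ψ x * φ y)
    (P0 : ℝ) (hP0 : P0 = ‖(1 / 2 : ℂ) • (φψ + ψφ)‖ ^ 2) :
    (2 * P0 - 1) * (d : ℝ) ^ 2 * ru ^ 2 * rv ^ 2 =
      (‖∑ i, starRingEnd ℂ (u i) * v i‖) ^ 2 := by
  have hd0 : (d : ℝ) ≠ 0 := by exact_mod_cast hd.ne'
  set S : ℂ := ∑ i, starRingEnd ℂ (u i) * v i with hS
  -- norms of ψ and φ
  have hψψ : (inner ℂ ψ ψ : ℂ) = 1 := by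
    simp only [PiLp.inner_apply, RCLike.inner_apply']
    rw [Fintype.sum_prod_type]
    have : ∀ i : Fin N, (∑ p : Fin 2 × Fin 2, starRingEnd ℂ (ψ (i, p)) * ψ (i, p)) =
        if v i = 0 then 0 else (((d : ℝ)⁻¹ : ℝ) : ℂ) := by
      intro i
      rw [Fintype.sum_prod_type]
      simp only [Fin.sum_univ_two, hψ0, hψ01, hψ11, map_zero, zero_mul, mul_zero,
        add_zero, zero_add]
      exact pair_norm d hd (v i) rv hrv (hvbd i)
    rw [Finset.sum_congr rfl fun i _ => this i]
    have h2 : (∑ i : Fin N, if v i = 0 then (0 : ℂ) else (((d : ℝ)⁻¹ : ℝ) : ℂ)) =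
        (Finset.univ.filter fun i => v i ≠ 0).card • ((((d : ℝ)⁻¹ : ℝ) : ℂ)) := by
      rw [← Finset.sum_const, Finset.sum_filter]
      exact Finset.sum_congr rfl fun i _ => by by_cases h : v i = 0 <;> simp [h]
    rw [h2, hvd, nsmul_eq_mul]
    push_cast
    field_simp
    exact div_self (by exact_mod_cast hd.ne')
  have hφφ : (inner ℂ φ φ : ℂ) = 1 := by
    simp only [PiLp.inner_apply, RCLike.inner_apply']
    rw [Fintype.sum_prod_type]
    have : ∀ i : Fin N, (∑ p : Fin 2 × Fin 2, starRingEnd ℂ (φ (i, p)) * φ (i, p)) =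
        if u i = 0 then 0 else (((d : ℝ)⁻¹ : ℝ) : ℂ) := by
      intro i
      rw [Fintype.sum_prod_type]
      simp only [Fin.sum_univ_two, hφ0, hφ10, hφ11, map_zero, zero_mul, mul_zero,
        add_zero, zero_add]
      exact pair_norm d hd (u i) ru hru (hubd i)
    rw [Finset.sum_congr rfl fun i _ => this i]
    have h2 : (∑ i : Fin N, if u i = 0 then (0 : ℂ) else (((d : ℝ)⁻¹ : ℝ) : ℂ)) =
        (Finset.univ.filter fun i => u i ≠ 0).card • ((((d : ℝ)⁻¹ : ℝ) : ℂ)) := by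
      rw [← Finset.sum_const, Finset.sum_filter]
      exact Finset.sum_congr rfl fun i _ => by by_cases h : u i = 0 <;> simp [h]
    rw [h2, hud, nsmul_eq_mul]
    push_cast
    field_simp
    exact div_self (by exact_mod_cast hd.ne')
  -- the overlap
  have hK : (inner ℂ φ ψ : ℂ) = S / ((d : ℂ) * ru * rv) := by
    simp only [PiLp.inner_apply, RCLike.inner_apply']
    rw [Fintype.sum_prod_type]
    have : ∀ i : Fin N, (∑ p : Fin 2 × Fin 2, starRingEnd ℂ (φ (i, p)) * ψ (i, p)) =
        starRingEnd ℂ (u i) * v i / ((d : ℂ) * ru * rv) := by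
      intro i
      rw [Fintype.sum_prod_type]
      simp only [Fin.sum_univ_two, hφ0, hψ0, hφ11, hψ11, map_zero, zero_mul, mul_zero,
        add_zero, zero_add]
      have hsd : ((Real.sqrt d : ℂ))⁻¹ * ((Real.sqrt d : ℂ))⁻¹ = ((d : ℂ))⁻¹ := by
        rw [← mul_inv, ← Complex.ofReal_mul, Real.mul_self_sqrt (by positivity)]
        push_cast; ring
      have hdd : ((Real.sqrt d : ℝ) : ℂ) * ((Real.sqrt d : ℝ) : ℂ) = (d : ℂ) := by
        rw [← Complex.ofReal_mul, Real.mul_self_sqrt (by positivity)]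
        push_cast; ring
      rw [map_div₀, map_mul, map_inv₀, Complex.conj_ofReal, Complex.conj_ofReal]
      field_simp
      rw [← hdd]; ring
    rw [Finset.sum_congr rfl fun i _ => this i, ← Finset.sum_div, hS]
  -- tensor inner products
  have h11 : (inner ℂ φψ φψ : ℂ) = 1 := by
    rw [tensor_inner φ ψ φ ψ φψ φψ hφψ hφψ, hφφ, hψψ, one_mul]
  have h22 : (inner ℂ ψφ ψφ : ℂ) = 1 := by
    rw [tensor_inner ψ φ ψ φ ψφ ψφ hψφ hψφ, hφφ, hψψ, one_mul]
  have h12 : (inner ℂ φψ ψφ : ℂ) = (Complex.normSq (inner ℂ φ ψ : ℂ) : ℂ) := by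
    rw [tensor_inner φ ψ ψ φ φψ ψφ hφψ hψφ]
    rw [← inner_conj_symm ψ φ, Complex.mul_conj]
  -- compute P0
  have hnφψ : ‖φψ‖ ^ 2 = 1 := by
    rw [norm_sq_eq_re_inner (𝕜 := ℂ), h11]; simp
  have hnψφ : ‖ψφ‖ ^ 2 = 1 := by
    rw [norm_sq_eq_re_inner (𝕜 := ℂ), h22]; simp
  have hP0' : P0 = (1 + Complex.normSq (inner ℂ φ ψ : ℂ)) / 2 := by
    rw [hP0, norm_smul]
    have : ‖(1 / 2 : ℂ)‖ = 1 / 2 := by simp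
    rw [this, mul_pow, norm_add_sq (𝕜 := ℂ), hnφψ, hnψφ, h12]
    simp
    ring
  have hq : Complex.normSq (inner ℂ φ ψ : ℂ) =
      Complex.normSq S / ((d : ℝ) ^ 2 * ru ^ 2 * rv ^ 2) := by
    rw [hK, Complex.normSq_div]
    congr 1
    simp only [Complex.normSq_mul]
    rw [show ((d : ℂ)) = (((d : ℝ) : ℂ)) by push_cast; ring]
    simp only [Complex.normSq_ofReal]
    ring
  rw [hP0', hq, Complex.sq_norm]
  field_simp
  ring
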